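/- Let Φ be a frame for 𝕂^n with m = 2n−1 vectors and lower frame bound A. Then there exists a tight dual frame Ψ of Φ, and the only possible frame bound of a tight dual frame of Φ is 1/A; that is, there exists Ψ with Ψ Φ* = I_n and Ψ Ψ* = (1/A)·I_n, and every Ψ with Ψ Φ* = I_n and Ψ Ψ* = c·I_n satisfies c = 1/A. -/

import Mathlib

open Matrix Polynomial

/-- `σ : Fin n → ℝ` is the non-increasingly ordered sequence of singular values of the
`n × m` matrix `Φ`: the `σ i` are positive, non-increasing, and their squares are the
eigenvalues (with multiplicity) of `Φ Φ*`, encoded via the characteristic polynomial. -/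
def HasSingularValues {𝕂 : Type} [RCLike 𝕂] {n m : ℕ}
    (Φ : Matrix (Fin n) (Fin m) 𝕂) (σ : Fin n → ℝ) : Prop :=
  Antitone σ ∧ (∀ i, 0 < σ i) ∧
    (Φ * Φᴴ).charpoly = ∏ i : Fin n, (X - C ((σ i : 𝕂) ^ 2))

private lemma tduals_roots_prod_X_sub_C {R : Type*} [CommRing R] [IsDomain R] {ι : Type*}
    [Fintype ι] (f : ι → R) : (∏ i : ι, (X - C (f i))).roots = Finset.univ.val.map f := by
  have h := Polynomial.roots_multiset_prod_X_sub_C (Finset.univ.val.map f)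
  rw [Multiset.map_map] at h
  exact h

private lemma tduals_charpoly_diagonal {R : Type*} [CommRing R] {k : ℕ} (d : Fin k → R) :
    (diagonal d).charpoly = ∏ i, (X - C (d i)) := by
  have h := Matrix.charpoly_of_upperTriangular (diagonal d) (Matrix.blockTriangular_diagonal d)
  simpa using h

private theorem tduals_charpoly_conj {𝕂 : Type} [RCLike 𝕂] {k : ℕ} (U M : Matrix (Fin k) (Fin k) 𝕂)
    (hU : U * Uᴴ = 1) :
    (U * M * Uᴴ).charpoly = M.charpoly := by
  let f := RingHom.mapMatrix (m := Fin k) (C : 𝕂 →+* 𝕂[X])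
  have hcomm : ∀ (B : Matrix (Fin k) (Fin k) 𝕂[X]),
      Matrix.scalar (Fin k) (X : 𝕂[X]) * B = B * Matrix.scalar (Fin k) (X : 𝕂[X]) :=
    fun B => (Matrix.scalar_commute _ (fun r' => Commute.all _ _) B).eq
  have key : charmatrix (U * M * Uᴴ) = f U * charmatrix M * f Uᴴ := by
    simp only [charmatrix, f, mul_sub, sub_mul]
    congr 1
    · rw [← hcomm (f U), mul_assoc, ← _root_.map_mul f, hU, _root_.map_one f, mul_one]
    · rw [← _root_.map_mul f, ← _root_.map_mul f]
  have hdet : (f U).det * (f Uᴴ).det = 1 := by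
    rw [← det_mul, ← _root_.map_mul f, hU, _root_.map_one f, det_one]
  rw [Matrix.charpoly, key, det_mul, det_mul, Matrix.charpoly, mul_right_comm, hdet, one_mul]


private theorem tduals_core_unique {𝕂 : Type} [RCLike 𝕂] {n m : ℕ} (hn : 1 ≤ n) (hm : m = 2 * n - 1)
    (μ : Fin n → ℝ) (A : ℝ) (hApos : 0 < A) (hAle : ∀ i, A ≤ μ i)
    (i₀ : Fin n) (hi₀ : μ i₀ = A)
    (Φ : Matrix (Fin n) (Fin m) 𝕂) (hrank : Φ.rank = n)
    (hΦΦ : Φ * Φᴴ = diagonal fun i => ((μ i : ℝ) : 𝕂))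
    (Ψ : Matrix (Fin n) (Fin m) 𝕂) (c : ℝ)
    (hdual : Ψ * Φᴴ = 1) (htight : Ψ * Ψᴴ = (c : 𝕂) • 1) : c = 1 / A := by
  classical
  have hμpos : ∀ i, 0 < μ i := fun i => lt_of_lt_of_le hApos (hAle i)
  have hμne : ∀ i, ((μ i : ℝ) : 𝕂) ≠ 0 := fun i =>
    RCLike.ofReal_ne_zero.mpr (ne_of_gt (hμpos i))
  set Dinv : Matrix (Fin n) (Fin n) 𝕂 := diagonal (fun i => ((μ i : ℝ) : 𝕂)⁻¹) with hDinvdef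
  have hDinvD : Dinv * (Φ * Φᴴ) = 1 := by
    rw [hΦΦ, hDinvdef, diagonal_mul_diagonal]
    rw [show (fun i => ((μ i : ℝ) : 𝕂)⁻¹ * ((μ i : ℝ) : 𝕂)) = fun _ => (1 : 𝕂) from
      funext fun i => inv_mul_cancel₀ (hμne i), diagonal_one]
  have hDinvH : Dinvᴴ = Dinv := by
    have hst : (star fun i => ((μ i : ℝ) : 𝕂)⁻¹) = fun i => ((μ i : ℝ) : 𝕂)⁻¹ :=
      funext fun i => by
        show star (((μ i : ℝ) : 𝕂)⁻¹) = ((μ i : ℝ) : 𝕂)⁻¹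
        rw [star_inv₀, RCLike.star_def, RCLike.conj_ofReal]
    rw [hDinvdef, diagonal_conjTranspose, hst]
  obtain ⟨W, hW⟩ : ∃ W, Ψ = Dinv * Φ + W := ⟨Ψ - Dinv * Φ, by abel⟩
  rw [hW] at hdual htight
  have hWΦ : W * Φᴴ = 0 := by
    rwa [Matrix.add_mul, Matrix.mul_assoc, hDinvD, add_eq_left] at hdual
  have hΦW : Φ * Wᴴ = 0 := by
    have h := congrArg conjTranspose hWΦ
    rwa [conjTranspose_mul, conjTranspose_conjTranspose, conjTranspose_zero] at h
  have hsmul : ∀ (z : 𝕂), z • (1 : Matrix (Fin n) (Fin n) 𝕂) = diagonal (fun _ => z) := by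
    intro z
    ext i j
    by_cases h : i = j <;> simp [h, Matrix.one_apply, diagonal]
  have hexp : W * Wᴴ = diagonal (fun i => (c : 𝕂) - ((μ i : ℝ) : 𝕂)⁻¹) := by
    have h2 := htight
    rw [conjTranspose_add, conjTranspose_mul, Matrix.add_mul, Matrix.mul_add, Matrix.mul_add,
      ← Matrix.mul_assoc W Φᴴ Dinvᴴ, hWΦ, Matrix.zero_mul,
      ← Matrix.mul_assoc (Dinv * Φ) Φᴴ Dinvᴴ, Matrix.mul_assoc Dinv Φ Φᴴ, hDinvD,
      Matrix.one_mul, hDinvH, Matrix.mul_assoc Dinv Φ Wᴴ, hΦW, Matrix.mul_zero,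
      add_zero, zero_add] at h2
    have h3 : W * Wᴴ = (c : 𝕂) • 1 - Dinv := by rw [← h2]; abel
    rw [h3, hsmul, hDinvdef, diagonal_sub]
  have hdiagnn : ∀ i, (μ i)⁻¹ ≤ c := by
    intro i
    have h1 : (W * Wᴴ) i i = (c : 𝕂) - ((μ i : ℝ) : 𝕂)⁻¹ := by
      rw [hexp, diagonal_apply_eq]
    have h2 : (W * Wᴴ) i i = ((∑ k, ‖W i k‖ ^ 2 : ℝ) : 𝕂) := by
      rw [Matrix.mul_apply, RCLike.ofReal_sum]
      refine Finset.sum_congr rfl fun k _ => ?_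
      rw [conjTranspose_apply, RCLike.star_def, RCLike.mul_conj]
      norm_cast
    have h3 : (c : 𝕂) - ((μ i : ℝ) : 𝕂)⁻¹ = ((c - (μ i)⁻¹ : ℝ) : 𝕂) := by push_cast; ring
    have h4 : c - (μ i)⁻¹ = ∑ k, ‖W i k‖ ^ 2 := by
      have := h1.symm.trans h2
      rw [h3] at this
      exact_mod_cast this
    have h5 : (0 : ℝ) ≤ ∑ k, ‖W i k‖ ^ 2 :=
      Finset.sum_nonneg fun k _ => sq_nonneg _
    linarith
  -- rank argument
  have hWrank : Wᴴ.rank ≤ n - 1 := by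
    have hker : LinearMap.range Wᴴ.mulVecLin ≤ LinearMap.ker Φ.mulVecLin := by
      rintro x ⟨y, rfl⟩
      simp only [LinearMap.mem_ker, mulVecLin_apply, mulVec_mulVec, hΦW, zero_mulVec]
    have h1 : Φ.rank + Module.finrank 𝕂 (LinearMap.ker Φ.mulVecLin) = m := by
      have h := LinearMap.finrank_range_add_finrank_ker Φ.mulVecLin
      rw [Module.finrank_pi] at h
      simpa [Matrix.rank] using h
    have h2 : Wᴴ.rank ≤ Module.finrank 𝕂 (LinearMap.ker Φ.mulVecLin) := by
      rw [Matrix.rank]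
      exact Submodule.finrank_mono hker
    omega
  have hex : ∃ j, (c : 𝕂) - ((μ j : ℝ) : 𝕂)⁻¹ = 0 := by
    by_contra hcon
    push_neg at hcon
    have hr1 : (W * Wᴴ).rank ≤ Wᴴ.rank := Matrix.rank_mul_le_right W Wᴴ
    rw [hexp, Matrix.rank_diagonal] at hr1
    have hcard : Fintype.card {j // (c : 𝕂) - ((μ j : ℝ) : 𝕂)⁻¹ ≠ 0} = n := by
      rw [Fintype.card_subtype]
      rw [Finset.filter_true_of_mem fun j _ => hcon j]
      simp
    rw [hcard] at hr1
    omega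
  obtain ⟨j, hj⟩ := hex
  have hcj : c = (μ j)⁻¹ := by
    have h1 : (c : 𝕂) = ((((μ j)⁻¹ : ℝ)) : 𝕂) := by
      rw [sub_eq_zero] at hj
      rw [hj]
      push_cast
      ring
    exact_mod_cast h1
  have hcge : A⁻¹ ≤ c := by
    have := hdiagnn i₀
    rwa [hi₀] at this
  have hcle : c ≤ A⁻¹ := by
    rw [hcj]
    exact inv_anti₀ hApos (hAle j)
  rw [one_div]
  linarith

private theorem tduals_core_exists {𝕂 : Type} [RCLike 𝕂] {n m : ℕ} (hn : 1 ≤ n) (hm : m = 2 * n - 1)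
    (μ : Fin n → ℝ) (A : ℝ) (hApos : 0 < A) (hAle : ∀ i, A ≤ μ i)
    (i₀ : Fin n) (hi₀ : μ i₀ = A)
    (Φ : Matrix (Fin n) (Fin m) 𝕂) (hrank : Φ.rank = n)
    (hΦΦ : Φ * Φᴴ = diagonal fun i => ((μ i : ℝ) : 𝕂)) :
    ∃ Ψ : Matrix (Fin n) (Fin m) 𝕂,
      Ψ * Φᴴ = 1 ∧ Ψ * Ψᴴ = ((1 / A : ℝ) : 𝕂) • (1 : Matrix (Fin n) (Fin n) 𝕂) := by
  classical
  have hμpos : ∀ i, 0 < μ i := fun i => lt_of_lt_of_le hApos (hAle i)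
  have hμne : ∀ i, ((μ i : ℝ) : 𝕂) ≠ 0 := fun i =>
    RCLike.ofReal_ne_zero.mpr (ne_of_gt (hμpos i))
  -- kernel of Φ as a subspace of EuclideanSpace
  set T : EuclideanSpace 𝕂 (Fin m) →ₗ[𝕂] (Fin n → 𝕂) :=
    Φ.mulVecLin ∘ₗ (WithLp.linearEquiv 2 𝕂 (Fin m → 𝕂)).toLinearMap with hTdef
  have hrangeT : LinearMap.range T = LinearMap.range Φ.mulVecLin := by
    rw [hTdef, LinearMap.range_comp, LinearEquiv.range, Submodule.map_top]
  have hkerT : Module.finrank 𝕂 (LinearMap.ker T) = n - 1 := by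
    have h1 := LinearMap.finrank_range_add_finrank_ker T
    rw [hrangeT] at h1
    have h2 : Module.finrank 𝕂 (EuclideanSpace 𝕂 (Fin m)) = m := by simp
    have h3 : Module.finrank 𝕂 (LinearMap.range Φ.mulVecLin) = n := hrank
    rw [h2, h3] at h1
    omega
  set b := stdOrthonormalBasis 𝕂 (LinearMap.ker T) with hbdef
  have hcard : Fintype.card {i : Fin n // i ≠ i₀} = Module.finrank 𝕂 (LinearMap.ker T) := by
    rw [hkerT, Fintype.card_subtype_compl, Fintype.card_subtype_eq, Fintype.card_fin]
  let e : {i : Fin n // i ≠ i₀} ≃ Fin (Module.finrank 𝕂 (LinearMap.ker T)) :=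
    Fintype.equivFinOfCardEq hcard
  set v : Fin n → EuclideanSpace 𝕂 (Fin m) :=
    fun i => if h : i = i₀ then 0 else ((b (e ⟨i, h⟩) : LinearMap.ker T) : EuclideanSpace 𝕂 (Fin m))
    with hvdef
  have hvker : ∀ i, Φ.mulVec (v i) = 0 := by
    intro i
    by_cases h : i = i₀
    · rw [hvdef]
      simp only [h, dif_pos]
      exact Matrix.mulVec_zero Φ
    · have hmem := (b (e ⟨i, h⟩)).2
      rw [LinearMap.mem_ker] at hmem
      rw [hvdef]
      simp only [dif_neg h]
      exact hmem
  have hvinner : ∀ (i j : Fin n), i ≠ i₀ → j ≠ i₀ →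
      (∑ k, (starRingEnd 𝕂) (v i k) * v j k) = if i = j then 1 else 0 := by
    intro i j hi hj
    have hb := orthonormal_iff_ite.mp b.orthonormal (e ⟨i, hi⟩) (e ⟨j, hj⟩)
    have h1 : (inner 𝕂 (v i) (v j) : 𝕂) = if i = j then 1 else 0 := by
      rw [hvdef]
      simp only [dif_neg hi, dif_neg hj]
      rw [← Submodule.coe_inner, hb]
      have : (e ⟨i, hi⟩ = e ⟨j, hj⟩) ↔ (i = j) := by
        rw [Equiv.apply_eq_iff_eq, Subtype.mk.injEq]
      by_cases hij : i = j
      · rw [if_pos (this.mpr hij), if_pos hij]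
      · rw [if_neg (fun hc => hij (this.mp hc)), if_neg hij]
    rw [← h1, PiLp.inner_apply]
    simp only [RCLike.inner_apply']
  -- the correction matrix
  set d : Fin n → ℝ := fun i => Real.sqrt (A⁻¹ - (μ i)⁻¹) with hddef
  have hdnn : ∀ i, (0 : ℝ) ≤ A⁻¹ - (μ i)⁻¹ := fun i =>
    sub_nonneg.mpr (inv_anti₀ hApos (hAle i))
  have hd2 : ∀ i, (d i) ^ 2 = A⁻¹ - (μ i)⁻¹ := fun i => Real.sq_sqrt (hdnn i)
  have hd0 : d i₀ = 0 := by rw [hddef]; simp [hi₀]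
  set W : Matrix (Fin n) (Fin m) 𝕂 :=
    Matrix.of (fun i k => ((d i : ℝ) : 𝕂) * (starRingEnd 𝕂) (v i k)) with hWdef
  have hWΦ : W * Φᴴ = 0 := by
    ext i j
    rw [Matrix.mul_apply, Matrix.zero_apply]
    have : ∀ k, W i k * Φᴴ k j = ((d i : ℝ) : 𝕂) * (starRingEnd 𝕂) (Φ j k * v i k) := by
      intro k
      rw [hWdef, conjTranspose_apply]
      show ((d i : ℝ) : 𝕂) * (starRingEnd 𝕂) (v i k) * star (Φ j k) = _
      rw [RCLike.star_def, _root_.map_mul (starRingEnd 𝕂) (Φ j k) (v i k)]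
      ring
    rw [Finset.sum_congr rfl fun k _ => this k, ← Finset.mul_sum, ← map_sum]
    have hmv : (∑ k, Φ j k * v i k) = Φ.mulVec (v i) j := rfl
    rw [hmv, hvker i]
    simp
  have hWW : W * Wᴴ = diagonal (fun i => ((A⁻¹ - (μ i)⁻¹ : ℝ) : 𝕂)) := by
    ext i j
    rw [Matrix.mul_apply]
    have hterm : ∀ k, W i k * Wᴴ k j
        = ((d i : ℝ) : 𝕂) * ((d j : ℝ) : 𝕂) * ((starRingEnd 𝕂) (v i k) * v j k) := by
      intro k
      rw [hWdef, conjTranspose_apply]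
      show ((d i : ℝ) : 𝕂) * (starRingEnd 𝕂) (v i k) *
        star (((d j : ℝ) : 𝕂) * (starRingEnd 𝕂) (v j k)) = _
      simp only [star_mul', RCLike.star_def, RCLike.conj_conj, RCLike.conj_ofReal]
      ring
    rw [Finset.sum_congr rfl fun k _ => hterm k, ← Finset.mul_sum]
    by_cases h0 : i = i₀
    · subst h0
      rw [hd0]
      by_cases hij : i = j
      · subst hij
        rw [diagonal_apply_eq]
        simp [hi₀]
      · rw [diagonal_apply_ne _ hij]
        simp
    · by_cases h1 : j = i₀
      · subst h1
        rw [hd0]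
        have hij : i ≠ j := h0
        rw [diagonal_apply_ne _ hij]
        simp
      · rw [hvinner i j h0 h1]
        by_cases hij : i = j
        · subst hij
          rw [diagonal_apply_eq, if_pos rfl, mul_one, ← RCLike.ofReal_mul, ← sq, hd2]
        · rw [diagonal_apply_ne _ hij, if_neg hij, mul_zero]
  set Dinv : Matrix (Fin n) (Fin n) 𝕂 := diagonal (fun i => (((μ i)⁻¹ : ℝ) : 𝕂)) with hDinvdef
  have hDinvD : Dinv * (Φ * Φᴴ) = 1 := by
    rw [hΦΦ, hDinvdef, diagonal_mul_diagonal]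
    rw [show (fun i => (((μ i)⁻¹ : ℝ) : 𝕂) * ((μ i : ℝ) : 𝕂)) = fun _ => (1 : 𝕂) from
      funext fun i => by
        rw [← RCLike.ofReal_mul, inv_mul_cancel₀ (ne_of_gt (hμpos i)), RCLike.ofReal_one],
      diagonal_one]
  have hDinvH : Dinvᴴ = Dinv := by
    have hst : (star fun i => (((μ i)⁻¹ : ℝ) : 𝕂)) = fun i => (((μ i)⁻¹ : ℝ) : 𝕂) :=
      funext fun i => by
        show star ((((μ i)⁻¹ : ℝ)) : 𝕂) = _
        rw [RCLike.star_def, RCLike.conj_ofReal]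
    rw [hDinvdef, diagonal_conjTranspose, hst]
  have hΦW : Φ * Wᴴ = 0 := by
    have h := congrArg conjTranspose hWΦ
    rwa [conjTranspose_mul, conjTranspose_conjTranspose, conjTranspose_zero] at h
  refine ⟨Dinv * Φ + W, ?_, ?_⟩
  · rw [Matrix.add_mul, Matrix.mul_assoc, hDinvD, hWΦ, add_zero]
  · rw [conjTranspose_add, conjTranspose_mul, Matrix.add_mul, Matrix.mul_add, Matrix.mul_add,
      ← Matrix.mul_assoc W Φᴴ Dinvᴴ, hWΦ, Matrix.zero_mul,
      ← Matrix.mul_assoc (Dinv * Φ) Φᴴ Dinvᴴ, Matrix.mul_assoc Dinv Φ Φᴴ, hDinvD,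
      Matrix.one_mul, hDinvH, Matrix.mul_assoc Dinv Φ Wᴴ, hΦW, Matrix.mul_zero,
      add_zero, zero_add, hWW, hDinvdef, diagonal_add]
    have hsmul : ((1 / A : ℝ) : 𝕂) • (1 : Matrix (Fin n) (Fin n) 𝕂)
        = diagonal (fun _ => ((1 / A : ℝ) : 𝕂)) := by
      ext i j
      by_cases h : i = j <;> simp [h, Matrix.one_apply, diagonal]
    rw [hsmul]
    have hfun : (fun i => (((μ i)⁻¹ : ℝ) : 𝕂) + ((A⁻¹ - (μ i)⁻¹ : ℝ) : 𝕂))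
        = fun _ => ((1 / A : ℝ) : 𝕂) := funext fun i => by
      rw [← RCLike.ofReal_add]
      congr 1
      rw [one_div]
      ring
    rw [hfun]

/-- Let `Φ` be a frame for `𝕂^n` with `m = 2n − 1` vectors and lower
frame bound `A` (the smallest eigenvalue of `Φ Φ*`). Then there exists a tight dual
frame of `Φ`, its frame bound necessarily being `1/A`: there is `Ψ` with `Ψ Φ* = I_n`
and `Ψ Ψ* = (1/A)·I_n`, and any tight dual frame `Ψ` with bound `c` has `c = 1/A`. -/
theorem tight_dual_of_eq_two_n_sub_one {𝕂 : Type} [RCLike 𝕂] {n m : ℕ}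
    (hn : 1 ≤ n) (hm : m = 2 * n - 1)
    (Φ : Matrix (Fin n) (Fin m) 𝕂) (hΦ : Φ.rank = n)
    (σ : Fin n → ℝ) (hσ : HasSingularValues Φ σ)
    (A : ℝ) (hA : A = σ ⟨n - 1, by omega⟩ ^ 2) :
    (∃ Ψ : Matrix (Fin n) (Fin m) 𝕂,
      Ψ * Φᴴ = 1 ∧ Ψ * Ψᴴ = ((1 / A : ℝ) : 𝕂) • (1 : Matrix (Fin n) (Fin n) 𝕂)) ∧
    ∀ (Ψ : Matrix (Fin n) (Fin m) 𝕂) (c : ℝ),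
      Ψ * Φᴴ = 1 → Ψ * Ψᴴ = (c : 𝕂) • (1 : Matrix (Fin n) (Fin n) 𝕂) →
      c = 1 / A := by
  classical
  obtain ⟨hanti, hpos, hcp⟩ := hσ
  set iN : Fin n := ⟨n - 1, by omega⟩ with hiN
  have hApos : 0 < A := by rw [hA]; exact pow_pos (hpos iN) 2
  have hS : (Φ * Φᴴ).IsHermitian := isHermitian_mul_conjTranspose_self Φ
  set μ : Fin n → ℝ := hS.eigenvalues with hμdef
  set V : Matrix (Fin n) (Fin n) 𝕂 := (hS.eigenvectorUnitary : Matrix (Fin n) (Fin n) 𝕂)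
    with hVdef
  have hVVH : V * Vᴴ = 1 := by
    rw [← Matrix.star_eq_conjTranspose]
    exact Unitary.coe_mul_star_self hS.eigenvectorUnitary
  have hVHV : Vᴴ * V = 1 := by
    rw [← Matrix.star_eq_conjTranspose]
    exact Unitary.coe_star_mul_self hS.eigenvectorUnitary
  have hdiag : Vᴴ * (Φ * Φᴴ) * V = diagonal (fun i => ((μ i : ℝ) : 𝕂)) := by
    rw [← Matrix.star_eq_conjTranspose]
    have := hS.conjStarAlgAut_star_eigenvectorUnitary
    rw [Unitary.conjStarAlgAut_star_apply] at this
    exact this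
  -- charpoly computation
  have hcp2 : (Φ * Φᴴ).charpoly = ∏ i, (X - C ((μ i : ℝ) : 𝕂)) := by
    conv_lhs => rw [hS.spectral_theorem, Unitary.conjStarAlgAut_apply]
    rw [Matrix.star_eq_conjTranspose,
      tduals_charpoly_conj V (diagonal (RCLike.ofReal ∘ hS.eigenvalues)) hVVH,
      tduals_charpoly_diagonal]
    rfl
  -- multiset of eigenvalues vs squared singular values
  have hroots : (Finset.univ.val.map fun i => ((σ i : 𝕂)) ^ 2)
      = Finset.univ.val.map (fun i => ((μ i : ℝ) : 𝕂)) := by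
    rw [← tduals_roots_prod_X_sub_C (fun i => ((σ i : 𝕂)) ^ 2),
      ← tduals_roots_prod_X_sub_C (fun i => ((μ i : ℝ) : 𝕂)), ← hcp, ← hcp2]
  have hsigleA : ∀ i, A ≤ σ i ^ 2 := by
    intro i
    have h1 : i ≤ iN := by
      rw [Fin.le_def]
      have := i.isLt
      simp only [hiN]
      omega
    have h2 : σ iN ≤ σ i := hanti h1
    rw [hA]
    have h3 : 0 ≤ σ iN := le_of_lt (hpos iN)
    exact pow_le_pow_left₀ h3 h2 2
  have hAle : ∀ j, A ≤ μ j := by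
    intro j
    have hmem : ((μ j : ℝ) : 𝕂) ∈ Finset.univ.val.map (fun i => ((μ i : ℝ) : 𝕂)) :=
      Multiset.mem_map_of_mem _ (Finset.mem_val.mpr (Finset.mem_univ j))
    rw [← hroots] at hmem
    obtain ⟨i, -, hi⟩ := Multiset.mem_map.mp hmem
    have h1 : ((σ i ^ 2 : ℝ) : 𝕂) = ((μ j : ℝ) : 𝕂) := by
      rw [RCLike.ofReal_pow]; exact hi
    have h2 : σ i ^ 2 = μ j := by exact_mod_cast h1
    rw [← h2]
    exact hsigleA i
  have hex_i0 : ∃ i₀, μ i₀ = A := by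
    have hmem : ((σ iN : 𝕂)) ^ 2 ∈ (Finset.univ.val.map fun i => ((σ i : 𝕂)) ^ 2) :=
      Multiset.mem_map_of_mem _ (Finset.mem_val.mpr (Finset.mem_univ iN))
    rw [hroots] at hmem
    obtain ⟨i₀, -, hi₀⟩ := Multiset.mem_map.mp hmem
    refine ⟨i₀, ?_⟩
    have h1 : ((μ i₀ : ℝ) : 𝕂) = ((A : ℝ) : 𝕂) := by
      rw [hi₀, ← RCLike.ofReal_pow, hA]
    exact_mod_cast h1
  obtain ⟨i₀, hi₀⟩ := hex_i0
  -- pass to the diagonalized frame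
  set Φ' : Matrix (Fin n) (Fin m) 𝕂 := Vᴴ * Φ with hΦ'def
  have hΦfact : V * Φ' = Φ := by
    rw [hΦ'def, ← Matrix.mul_assoc, hVVH, Matrix.one_mul]
  have hΦ'Φ' : Φ' * Φ'ᴴ = diagonal (fun i => ((μ i : ℝ) : 𝕂)) := by
    rw [hΦ'def, conjTranspose_mul, conjTranspose_conjTranspose, ← Matrix.mul_assoc,
      Matrix.mul_assoc Vᴴ Φ Φᴴ, hdiag]
  have hdetV : IsUnit Vᴴ.det :=
    IsUnit.of_mul_eq_one V.det (by rw [← det_mul, hVHV, det_one])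
  have hrank' : Φ'.rank = n := by
    rw [hΦ'def, Matrix.rank_mul_eq_right_of_isUnit_det Vᴴ Φ hdetV]
    exact hΦ
  constructor
  · obtain ⟨Ψ', h1, h2⟩ := tduals_core_exists hn hm μ A hApos hAle i₀ hi₀ Φ' hrank' hΦ'Φ'
    refine ⟨V * Ψ', ?_, ?_⟩
    · rw [← hΦfact, conjTranspose_mul, ← Matrix.mul_assoc (V * Ψ') Φ'ᴴ Vᴴ,
        Matrix.mul_assoc V Ψ' Φ'ᴴ, h1, Matrix.mul_one, hVVH]
    · rw [conjTranspose_mul, ← Matrix.mul_assoc (V * Ψ') Ψ'ᴴ Vᴴ,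
        Matrix.mul_assoc V Ψ' Ψ'ᴴ, h2, Matrix.mul_smul, Matrix.mul_one, Matrix.smul_mul, hVVH]
  · intro Ψ c h1 h2
    have h1' : (Vᴴ * Ψ) * Φ'ᴴ = 1 := by
      rw [hΦ'def, conjTranspose_mul, conjTranspose_conjTranspose,
        ← Matrix.mul_assoc (Vᴴ * Ψ) Φᴴ V, Matrix.mul_assoc Vᴴ Ψ Φᴴ, h1, Matrix.mul_one, hVHV]
    have h2' : (Vᴴ * Ψ) * (Vᴴ * Ψ)ᴴ = (c : 𝕂) • 1 := by
      rw [conjTranspose_mul, conjTranspose_conjTranspose,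
        ← Matrix.mul_assoc (Vᴴ * Ψ) Ψᴴ V, Matrix.mul_assoc Vᴴ Ψ Ψᴴ, h2, Matrix.mul_smul, Matrix.mul_one, Matrix.smul_mul, hVHV]
    exact tduals_core_unique hn hm μ A hApos hAle i₀ hi₀ Φ' hrank' hΦ'Φ' (Vᴴ * Ψ) c h1' h2'
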